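/- There exist constants c, C > 0, depending only on d₁ and d₂, such that for every x ∈ ℝ^{d₁} × ℝ^{d₂} and every r > 0, c · r^{d₁+d₂} · max{r, |x'|}^{d₂} ≤ |B^ϱ(x, r)| ≤ C · r^{d₁+d₂} · max{r, |x'|}^{d₂}. -/

import Mathlib

open MeasureTheory

/-- The Grushin quasi-distance on `ℝ^{d₁} × ℝ^{d₂}`. -/
noncomputable def grushinDist {d₁ d₂ : ℕ}
    (x y : EuclideanSpace ℝ (Fin d₁) × EuclideanSpace ℝ (Fin d₂)) : ℝ :=
  if Real.sqrt ‖x.2 - y.2‖ ≤ ‖x.1‖ + ‖y.1‖ then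
    ‖x.1 - y.1‖ + ‖x.2 - y.2‖ / (‖x.1‖ + ‖y.1‖)
  else
    ‖x.1 - y.1‖ + Real.sqrt ‖x.2 - y.2‖

/-- The closed Grushin ball `B^ϱ(x, r) = {y : ϱ(x, y) ≤ r}`. -/
def grushinBall {d₁ d₂ : ℕ}
    (x : EuclideanSpace ℝ (Fin d₁) × EuclideanSpace ℝ (Fin d₂)) (r : ℝ) :
    Set (EuclideanSpace ℝ (Fin d₁) × EuclideanSpace ℝ (Fin d₂)) :=
  {y | grushinDist x y ≤ r}

private lemma aux_div_le_sqrt {t s : ℝ} (ht : 0 ≤ t) (h : Real.sqrt t ≤ s) :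
    t / s ≤ Real.sqrt t := by
  rcases eq_or_lt_of_le (Real.sqrt_nonneg t) with h0 | h0
  · have ht' : t = 0 := by nlinarith [Real.sq_sqrt ht]
    simp [ht']
  · have hs : 0 < s := lt_of_lt_of_le h0 h
    rw [div_le_iff₀ hs]
    calc t = Real.sqrt t * Real.sqrt t := (Real.mul_self_sqrt ht).symm
      _ ≤ Real.sqrt t * s := by nlinarith

private lemma grushin_lower {d₁ d₂ : ℕ}
    (x : EuclideanSpace ℝ (Fin d₁) × EuclideanSpace ℝ (Fin d₂)) {r : ℝ} (hr : 0 < r) :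
    Metric.closedBall x.1 (r / 2) ×ˢ Metric.closedBall x.2 (r * max r ‖x.1‖ / 16) ⊆
      grushinBall x r := by
  rintro ⟨y₁, y₂⟩ ⟨h1, h2⟩
  simp only [Metric.mem_closedBall, dist_eq_norm] at h1 h2
  set M := max r ‖x.1‖ with hM
  have hMr : r ≤ M := le_max_left _ _
  have ha : ‖x.1 - y₁‖ ≤ r / 2 := by rwa [norm_sub_rev]
  have ht' : ‖x.2 - y₂‖ ≤ r * M / 16 := by rwa [norm_sub_rev]
  set t := ‖x.2 - y₂‖ with hts
  set s := ‖x.1‖ + ‖y₁‖ with hss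
  have ht0 : 0 ≤ t := norm_nonneg _
  show grushinDist x (y₁, y₂) ≤ r
  unfold grushinDist
  simp only [← hts, ← hss]
  split_ifs with h
  · have hts2 : t / s ≤ r / 2 := by
      rcases le_total ‖x.1‖ r with hx | hx
      · have hM' : M = r := max_eq_left hx
        have hsq : Real.sqrt t ≤ r / 4 := by
          rw [show r / 4 = Real.sqrt ((r/4)^2) from (Real.sqrt_sq (by positivity)).symm]
          exact Real.sqrt_le_sqrt (by nlinarith)
        calc t / s ≤ Real.sqrt t := aux_div_le_sqrt ht0 h
          _ ≤ r / 2 := by linarith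
      · have hx0 : 0 < ‖x.1‖ := lt_of_lt_of_le hr hx
        have hM' : M = ‖x.1‖ := max_eq_right hx
        have hs1 : ‖x.1‖ ≤ s := le_add_of_nonneg_right (norm_nonneg _)
        calc t / s ≤ t / ‖x.1‖ := by gcongr
          _ ≤ (r * ‖x.1‖ / 16) / ‖x.1‖ := by gcongr; rwa [hM'] at ht'
          _ = r / 16 := by field_simp
          _ ≤ r / 2 := by linarith
    linarith
  · push_neg at h
    have hx : ‖x.1‖ ≤ r := by
      by_contra hc
      push_neg at hc
      have hM' : M = ‖x.1‖ := max_eq_right hc.le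
      have hsq : Real.sqrt t ≤ ‖x.1‖ / 4 := by
        rw [show ‖x.1‖ / 4 = Real.sqrt ((‖x.1‖/4)^2) from (Real.sqrt_sq (by positivity)).symm]
        exact Real.sqrt_le_sqrt (by nlinarith)
      have hs1 : ‖x.1‖ ≤ s := le_add_of_nonneg_right (norm_nonneg _)
      nlinarith [norm_nonneg x.1]
    have hM' : M = r := max_eq_left hx
    have hsq : Real.sqrt t ≤ r / 4 := by
      rw [show r / 4 = Real.sqrt ((r/4)^2) from (Real.sqrt_sq (by positivity)).symm]
      exact Real.sqrt_le_sqrt (by nlinarith)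
    linarith

private lemma grushin_upper {d₁ d₂ : ℕ}
    (x : EuclideanSpace ℝ (Fin d₁) × EuclideanSpace ℝ (Fin d₂)) {r : ℝ} (hr : 0 < r) :
    grushinBall x r ⊆
      Metric.closedBall x.1 r ×ˢ Metric.closedBall x.2 (3 * (r * max r ‖x.1‖)) := by
  rintro ⟨y₁, y₂⟩ hy
  have hy' : grushinDist x (y₁, y₂) ≤ r := hy
  unfold grushinDist at hy'
  set M := max r ‖x.1‖ with hM
  have hMr : r ≤ M := le_max_left _ _
  have hMx : ‖x.1‖ ≤ M := le_max_right _ _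
  set t := ‖x.2 - y₂‖ with hts
  set s := ‖x.1‖ + ‖y₁‖ with hss
  have ht0 : 0 ≤ t := norm_nonneg _
  have hs0 : 0 ≤ s := by positivity
  simp only [← hts, ← hss] at hy'
  constructor
  · simp only [Metric.mem_closedBall, dist_eq_norm]
    rw [norm_sub_rev]
    split_ifs at hy' with h
    · have : 0 ≤ t / s := div_nonneg ht0 hs0
      linarith
    · have : 0 ≤ Real.sqrt t := Real.sqrt_nonneg t
      linarith
  · simp only [Metric.mem_closedBall, dist_eq_norm]
    rw [norm_sub_rev]
    split_ifs at hy' with h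
    · -- first branch
      have ha : ‖x.1 - y₁‖ ≤ r := by
        have : 0 ≤ t / s := div_nonneg ht0 hs0
        linarith
      have hy1 : ‖y₁‖ ≤ ‖x.1‖ + r := by
        have h1 : ‖y₁‖ - ‖x.1‖ ≤ ‖y₁ - x.1‖ := norm_sub_norm_le _ _
        rw [norm_sub_rev] at h1
        linarith
      have hsM : s ≤ 3 * M := by rw [hss]; linarith
      rcases eq_or_lt_of_le hs0 with hs | hs
      · have ht : t = 0 := by
          have h0 : Real.sqrt t ≤ 0 := by rw [hs]; exact h
          have := Real.sqrt_nonneg t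
          have h1 : Real.sqrt t = 0 := le_antisymm h0 this
          nlinarith [Real.sq_sqrt ht0]
        rw [← hts, ht]; positivity
      · have hts2 : t / s ≤ r := by
          have : 0 ≤ ‖x.1 - y₁‖ := norm_nonneg _
          linarith
        rw [← hts]
        calc t = t / s * s := (div_mul_cancel₀ t hs.ne').symm
          _ ≤ r * (3 * M) := mul_le_mul hts2 hsM hs0 hr.le
          _ = 3 * (r * M) := by ring
    · have hsq : Real.sqrt t ≤ r := by
        have : 0 ≤ ‖x.1 - y₁‖ := norm_nonneg _
        linarith
      have ht1 : t ≤ r ^ 2 := by nlinarith [Real.sq_sqrt ht0, Real.sqrt_nonneg t]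
      rw [← hts]
      nlinarith

theorem grushinBall_volume (d₁ d₂ : ℕ) (hd₁ : 1 ≤ d₁) (hd₂ : 1 ≤ d₂) :
    ∃ c C : ℝ, 0 < c ∧ 0 < C ∧
      ∀ (x : EuclideanSpace ℝ (Fin d₁) × EuclideanSpace ℝ (Fin d₂)) (r : ℝ), 0 < r →
        ENNReal.ofReal (c * r ^ (d₁ + d₂) * (max r ‖x.1‖) ^ d₂) ≤
            volume (grushinBall x r) ∧
          volume (grushinBall x r) ≤
            ENNReal.ofReal (C * r ^ (d₁ + d₂) * (max r ‖x.1‖) ^ d₂) := by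
  set κ₁ := volume (Metric.ball (0 : EuclideanSpace ℝ (Fin d₁)) 1) with hκ₁
  set κ₂ := volume (Metric.ball (0 : EuclideanSpace ℝ (Fin d₂)) 1) with hκ₂
  have hκ₁top : κ₁ ≠ ⊤ := measure_ball_lt_top.ne
  have hκ₂top : κ₂ ≠ ⊤ := measure_ball_lt_top.ne
  have hκ₁pos : 0 < κ₁ :=
    Metric.measure_ball_pos volume 0 one_pos
  have hκ₂pos : 0 < κ₂ :=
    Metric.measure_ball_pos volume 0 one_pos
  set k₁ := κ₁.toReal with hk₁def
  set k₂ := κ₂.toReal with hk₂def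
  have hk₁ : 0 < k₁ := ENNReal.toReal_pos hκ₁pos.ne' hκ₁top
  have hk₂ : 0 < k₂ := ENNReal.toReal_pos hκ₂pos.ne' hκ₂top
  have hκ₁eq : κ₁ = ENNReal.ofReal k₁ := (ENNReal.ofReal_toReal hκ₁top).symm
  have hκ₂eq : κ₂ = ENNReal.ofReal k₂ := (ENNReal.ofReal_toReal hκ₂top).symm
  have hfin₁ : Module.finrank ℝ (EuclideanSpace ℝ (Fin d₁)) = d₁ := finrank_euclideanSpace_fin
  have hfin₂ : Module.finrank ℝ (EuclideanSpace ℝ (Fin d₂)) = d₂ := finrank_euclideanSpace_fin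
  have hvol : ∀ (x : EuclideanSpace ℝ (Fin d₁) × EuclideanSpace ℝ (Fin d₂)) (ρ₁ ρ₂ : ℝ),
      0 ≤ ρ₁ → 0 ≤ ρ₂ →
      volume (Metric.closedBall x.1 ρ₁ ×ˢ Metric.closedBall x.2 ρ₂) =
        ENNReal.ofReal (ρ₁ ^ d₁ * k₁ * (ρ₂ ^ d₂ * k₂)) := by
    intro x ρ₁ ρ₂ h₁ h₂
    rw [Measure.volume_eq_prod, Measure.prod_prod,
      Measure.addHaar_closedBall _ _ h₁, Measure.addHaar_closedBall _ _ h₂,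
      hfin₁, hfin₂, ← hκ₁, ← hκ₂, hκ₁eq, hκ₂eq,
      ← ENNReal.ofReal_mul (by positivity), ← ENNReal.ofReal_mul (by positivity),
      ← ENNReal.ofReal_mul (by positivity)]
  refine ⟨(2:ℝ)⁻¹ ^ d₁ * (16:ℝ)⁻¹ ^ d₂ * (k₁ * k₂), 3 ^ d₂ * (k₁ * k₂), by positivity,
    by positivity, ?_⟩
  intro x r hr
  set M := max r ‖x.1‖ with hM
  have hM0 : 0 < M := lt_of_lt_of_le hr (le_max_left _ _)
  constructor
  · calc ENNReal.ofReal ((2:ℝ)⁻¹ ^ d₁ * (16:ℝ)⁻¹ ^ d₂ * (k₁ * k₂) * r ^ (d₁ + d₂) * M ^ d₂)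
        = volume (Metric.closedBall x.1 (r / 2) ×ˢ Metric.closedBall x.2 (r * M / 16)) := by
          rw [hvol x (r/2) (r * M / 16) (by positivity) (by positivity)]
          congr 1
          rw [pow_add]
          ring
      _ ≤ volume (grushinBall x r) := measure_mono (grushin_lower x hr)
  · calc volume (grushinBall x r)
        ≤ volume (Metric.closedBall x.1 r ×ˢ Metric.closedBall x.2 (3 * (r * M))) :=
          measure_mono (grushin_upper x hr)
      _ = ENNReal.ofReal ((3:ℝ) ^ d₂ * (k₁ * k₂) * r ^ (d₁ + d₂) * M ^ d₂) := by
          rw [hvol x r (3 * (r * M)) (by positivity) (by positivity)]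
          congr 1
          rw [pow_add]
          ring
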